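/- The map sending ψ to the set K_ψ := {(n, m, m') ∈ M × M × M : (n, m) ∈ L_φ and m' + N = ψ(n, m)} is a bijection from the set of A-linear homomorphisms ψ : L_φ → M/N satisfying ψ(0, n) = φ(n) for all n ∈ N, onto the set of A-submodules K of M × M × M satisfying: (i) e'(K) ⊆ K, where e' : M × M × M → M × M × M is the A-linear map (m₁, m₂, m₃) ↦ (0, m₁, m₂); (ii) the image of K under the projection onto the first two factors equals L_φ; (iii) K ∩ ({0} × {0} × M) = {0} × {0} × N. -/
import Mathlib


/-- Given `φ : N → M/N` with first-order deformation `L = L_φ ⊆ M × M`, the map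
`ψ ↦ K_ψ := {(n, m, m') : (n, m) ∈ L_φ, m' + N = ψ(n, m)}` is a bijection from the set of
`A`-linear maps `ψ : L_φ → M/N` with `ψ(0, n) = φ(n)` for all `n ∈ N`, onto the set of
`A`-submodules `K ⊆ M × M × M` with (i) `e'(K) ⊆ K` where `e'(m₁, m₂, m₃) = (0, m₁, m₂)`,
(ii) the projection onto the first two factors maps `K` onto `L_φ`, and
(iii) `K ∩ ({0} × {0} × M) = {0} × {0} × N`. -/
theorem secondOrderDeformations_bijection
    (A : Type) [CommRing A] (M : Type) [AddCommGroup M] [Module A M]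
    (N : Submodule A M) (φ : N →ₗ[A] M ⧸ N) (L : Submodule A (M × M))
    (hL : (L : Set (M × M)) =
      {p : M × M | ∃ h : p.1 ∈ N,
        (Submodule.Quotient.mk p.2 : M ⧸ N) = φ ⟨p.1, h⟩}) :
    ∃ F : {ψ : L →ₗ[A] M ⧸ N //
            ∀ (n : M) (hn : n ∈ N) (hm : ((0 : M), n) ∈ L),
              ψ ⟨((0 : M), n), hm⟩ = φ ⟨n, hn⟩} →
          Submodule A (M × M × M),
      (∀ ψ, (F ψ : Set (M × M × M)) =
        {p : M × M × M | ∃ h : (p.1, p.2.1) ∈ L,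
          (Submodule.Quotient.mk p.2.2 : M ⧸ N) = ψ.1 ⟨(p.1, p.2.1), h⟩}) ∧
      (∀ ψ,
        (∀ p ∈ F ψ, ((0 : M), p.1, p.2.1) ∈ F ψ) ∧
        Submodule.map
          (LinearMap.prod (LinearMap.fst A M (M × M))
            ((LinearMap.fst A M M).comp (LinearMap.snd A M (M × M)))) (F ψ) = L ∧
        F ψ ⊓ Submodule.prod ⊥ (Submodule.prod ⊥ ⊤) =
          Submodule.prod ⊥ (Submodule.prod ⊥ N)) ∧
      Function.Injective F ∧
      (∀ K : Submodule A (M × M × M),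
        (∀ p ∈ K, ((0 : M), p.1, p.2.1) ∈ K) →
        Submodule.map
          (LinearMap.prod (LinearMap.fst A M (M × M))
            ((LinearMap.fst A M M).comp (LinearMap.snd A M (M × M)))) K = L →
        K ⊓ Submodule.prod ⊥ (Submodule.prod ⊥ ⊤) =
          Submodule.prod ⊥ (Submodule.prod ⊥ N) →
        ∃ ψ, F ψ = K) := by
  classical
  have hmem : ∀ p : M × M, p ∈ L ↔ ∃ h : p.1 ∈ N,
      (Submodule.Quotient.mk p.2 : M ⧸ N) = φ ⟨p.1, h⟩ := by
    intro p
    rw [← SetLike.mem_coe, hL]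
    rfl
  have h0n : ∀ n : M, n ∈ N → ((0 : M), n) ∈ L := by
    intro n hn
    rw [hmem]
    refine ⟨N.zero_mem, ?_⟩
    rw [show (⟨0, N.zero_mem⟩ : N) = 0 from rfl, map_zero]
    exact (Submodule.Quotient.mk_eq_zero N).2 hn
  refine ⟨fun ψ =>
    { carrier := {p : M × M × M | ∃ h : (p.1, p.2.1) ∈ L,
        (Submodule.Quotient.mk p.2.2 : M ⧸ N) = ψ.1 ⟨(p.1, p.2.1), h⟩}
      add_mem' := ?_
      zero_mem' := ?_
      smul_mem' := ?_ }, ?_, ?_, ?_, ?_⟩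
  · rintro a b ⟨ha, ha2⟩ ⟨hb, hb2⟩
    refine ⟨L.add_mem ha hb, ?_⟩
    have h1 : (⟨((a + b).1, (a + b).2.1), L.add_mem ha hb⟩ : L)
        = ⟨(a.1, a.2.1), ha⟩ + ⟨(b.1, b.2.1), hb⟩ := rfl
    rw [h1, map_add, ← ha2, ← hb2]
    rfl
  · refine ⟨L.zero_mem, ?_⟩
    have h1 : (⟨(((0 : M × M × M)).1, ((0 : M × M × M)).2.1), L.zero_mem⟩ : L) = 0 := rfl
    rw [h1, map_zero]
    rfl
  · rintro c a ⟨ha, ha2⟩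
    refine ⟨L.smul_mem c ha, ?_⟩
    have h1 : (⟨((c • a).1, (c • a).2.1), L.smul_mem c ha⟩ : L)
        = c • ⟨(a.1, a.2.1), ha⟩ := rfl
    rw [h1, map_smul, ← ha2]
    rfl
  · intro ψ
    rfl
  · intro ψ
    refine ⟨?_, ?_, ?_⟩
    · rintro p ⟨hp, hp2⟩
      obtain ⟨hn, hm⟩ := (hmem _).1 hp
      refine ⟨h0n _ hn, ?_⟩
      rw [ψ.2 p.1 hn (h0n _ hn)]
      exact hm
    · apply le_antisymm
      · rintro x ⟨p, ⟨hp, _⟩, rfl⟩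
        exact hp
      · rintro ⟨x1, x2⟩ hx
        obtain ⟨m', hm'⟩ := Submodule.Quotient.mk_surjective N (ψ.1 ⟨(x1, x2), hx⟩)
        exact ⟨(x1, x2, m'), ⟨hx, hm'⟩, rfl⟩
    · apply le_antisymm
      · rintro ⟨p1, p2, p3⟩ ⟨⟨hp, hp2⟩, h1, h2, -⟩
        simp only [Submodule.mem_bot] at h1 h2
        subst h1; subst h2
        refine ⟨rfl, rfl, ?_⟩
        rw [show (⟨((0 : M), (0 : M)), hp⟩ : L) = 0 from rfl, map_zero] at hp2
        exact (Submodule.Quotient.mk_eq_zero N).1 hp2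
      · rintro ⟨p1, p2, p3⟩ ⟨h1, h2, h3⟩
        simp only [Submodule.mem_bot] at h1 h2
        subst h1; subst h2
        refine ⟨⟨L.zero_mem, ?_⟩, rfl, rfl, trivial⟩
        rw [show (⟨((0 : M), (0 : M)), L.zero_mem⟩ : L) = 0 from rfl, map_zero]
        exact (Submodule.Quotient.mk_eq_zero N).2 h3
  · intro ψ1 ψ2 h
    apply Subtype.ext
    apply LinearMap.ext
    rintro ⟨⟨x1, x2⟩, hx⟩
    obtain ⟨m', hm'⟩ := Submodule.Quotient.mk_surjective N (ψ1.1 ⟨(x1, x2), hx⟩)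
    have h2 := SetLike.ext_iff.mp h (x1, x2, m')
    have hmem2 : ∃ hh : ((x1, x2) : M × M) ∈ L,
        (Submodule.Quotient.mk m' : M ⧸ N) = ψ2.1 ⟨(x1, x2), hh⟩ :=
      h2.mp ⟨hx, hm'⟩
    obtain ⟨hx', hm2⟩ := hmem2
    rw [← hm', hm2]
  · intro K hK1 hK2 hK3
    -- well-definedness
    have hwd : ∀ (m1 m2 m m' : M), (m1, m2, m) ∈ K → (m1, m2, m') ∈ K →
        (Submodule.Quotient.mk m : M ⧸ N) = Submodule.Quotient.mk m' := by
      intro m1 m2 m m' h h'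
      have hd : ((0 : M), (0 : M), m - m') ∈ K ⊓ Submodule.prod ⊥ (Submodule.prod ⊥ ⊤) := by
        constructor
        · have := K.sub_mem h h'
          simpa using this
        · exact ⟨rfl, rfl, trivial⟩
      rw [hK3] at hd
      exact (Submodule.Quotient.eq N).2 hd.2.2
    have hex : ∀ p : L, ∃ m' : M, (p.1.1, p.1.2, m') ∈ K := by
      rintro ⟨⟨x1, x2⟩, hx⟩
      rw [← hK2] at hx
      obtain ⟨q, hq, hq2⟩ := hx
      have e1 : q.1 = x1 := congrArg Prod.fst hq2
      have e2 : q.2.1 = x2 := congrArg Prod.snd hq2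
      refine ⟨q.2.2, ?_⟩
      have hq3 : (x1, x2, q.2.2) = q := by rw [← e1, ← e2]
      exact hq3 ▸ hq
    choose w hw using hex
    have hwval : ∀ (p : L) (m' : M), (p.1.1, p.1.2, m') ∈ K →
        (Submodule.Quotient.mk (w p) : M ⧸ N) = Submodule.Quotient.mk m' :=
      fun p m' h' => hwd _ _ _ _ (hw p) h'
    refine ⟨⟨{ toFun := fun p => Submodule.Quotient.mk (w p)
               map_add' := ?_
               map_smul' := ?_ }, ?_⟩, ?_⟩
    · intro p q
      have hsum : (((p + q) : L).1.1, ((p + q) : L).1.2, w p + w q) ∈ K :=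
        K.add_mem (hw p) (hw q)
      show (Submodule.Quotient.mk (w (p + q)) : M ⧸ N)
          = Submodule.Quotient.mk (w p) + Submodule.Quotient.mk (w q)
      rw [hwval (p + q) _ hsum, Submodule.Quotient.mk_add]
    · intro c p
      have hs : (((c • p) : L).1.1, ((c • p) : L).1.2, c • w p) ∈ K := K.smul_mem c (hw p)
      show (Submodule.Quotient.mk (w (c • p)) : M ⧸ N) = c • Submodule.Quotient.mk (w p)
      rw [hwval (c • p) _ hs, Submodule.Quotient.mk_smul]
    · intro n hn hm
      obtain ⟨m, hmk⟩ := Submodule.Quotient.mk_surjective N (φ ⟨n, hn⟩)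
      have hnm : (n, m) ∈ L := (hmem _).2 ⟨hn, hmk⟩
      rw [← hK2] at hnm
      obtain ⟨q, hq, hq2⟩ := hnm
      have h0 : ((0 : M), q.1, q.2.1) ∈ K := hK1 q hq
      have e1 : q.1 = n := congrArg Prod.fst hq2
      have e2 : q.2.1 = m := congrArg Prod.snd hq2
      rw [e1, e2] at h0
      simp only [LinearMap.coe_mk, AddHom.coe_mk]
      rw [hwval ⟨((0 : M), n), hm⟩ m h0, hmk]
    · apply le_antisymm
      · rintro ⟨p1, p2, p3⟩ ⟨hp, hp2⟩
        simp only [LinearMap.coe_mk, AddHom.coe_mk] at hp2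
        have hKN : Submodule.prod ⊥ (Submodule.prod ⊥ N) ≤ K := by
          rw [← hK3]; exact inf_le_left
        have hw1 : (p1, p2, w ⟨(p1, p2), hp⟩) ∈ K := hw ⟨(p1, p2), hp⟩
        have hd : p3 - w ⟨(p1, p2), hp⟩ ∈ N := by
          rw [← Submodule.Quotient.eq]
          exact hp2
        have : (p1, p2, p3) = (p1, p2, w ⟨(p1, p2), hp⟩)
            + ((0 : M), (0 : M), p3 - w ⟨(p1, p2), hp⟩) := by
          ext <;> simp
        rw [this]
        exact K.add_mem hw1 (hKN ⟨rfl, rfl, hd⟩)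
      · rintro ⟨p1, p2, p3⟩ hp
        have hpL : (p1, p2) ∈ L := by
          rw [← hK2]
          exact ⟨(p1, p2, p3), hp, rfl⟩
        exact ⟨hpL, (hwval ⟨(p1, p2), hpL⟩ p3 hp).symm⟩
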